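/- Let x ∈ (Z_d)^N have at least one zero coordinate with x ≠ (0,...,0), with orbit under cyclic shifts {(i_1^{(j)},...,i_N^{(j)}) : j ∈ Z_k}, k ≥ 2. Then each state |ψ_s⟩ = Σ_{j∈Z_k} ω_k^{sj} |i_1^{(j)}⟩⊗...⊗|i_N^{(j)}⟩ (s ∈ Z_k) has Schmidt rank at least 2 across the bipartition A_1 | A_2...A_N; i.e., it is entangled in that cut. -/

import Mathlib

/-- Number of zero coordinates of a tuple. -/
def zcount {d m : ℕ} [NeZero d] (v : Fin m → Fin d) : ℕ := ∑ i, if v i = 0 then 1 else 0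

lemma zcount_cons {d m : ℕ} [NeZero d] (a : Fin d) (b : Fin m → Fin d) :
    zcount (Fin.cons a b) = (if a = 0 then 1 else 0) + zcount b := by
  simp only [zcount, Fin.sum_univ_succ, Fin.cons_zero, Fin.cons_succ]

lemma zcount_self_tail {d m : ℕ} [NeZero d] (v : Fin (m + 1) → Fin d) :
    zcount v = (if v 0 = 0 then 1 else 0) + zcount (Fin.tail v) := by
  rw [← zcount_cons (v 0) (Fin.tail v), Fin.cons_self_tail]

lemma zcount_shift {d N : ℕ} [NeZero d] (x : Fin (N + 1) → Fin d) (c : Fin (N + 1)) :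
    zcount (fun i => x (i + c)) = zcount x :=
  Fintype.sum_equiv (Equiv.addRight c) (fun i => if x (i + c) = 0 then 1 else 0)
    (fun i => if x i = 0 then 1 else 0) (fun _ => rfl)

/-- Let x ∈ (Z_d)^{N+1} have a zero coordinate and not be the all-zero tuple,
with orbit under cyclic shifts enumerated (without repetition) by
f : Fin k → (Z_d)^{N+1}, k ≥ 2.  Then each state
|ψ_s⟩ = Σ_j ω_k^{sj} |i_1^{(j)}⟩⊗...⊗|i_{N+1}^{(j)}⟩ has Schmidt rank at
least 2 across the bipartition A_1 | A_2...A_{N+1}, i.e. it is entangled in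
that cut. -/
theorem stmt8 (d N k : ℕ) [NeZero d] (hd : 2 ≤ d) (hN : 1 ≤ N) (hk : 2 ≤ k)
    (x : Fin (N + 1) → Fin d) (hx0 : ∃ i, x i = 0) (hxne : x ≠ 0)
    (f : Fin k → (Fin (N + 1) → Fin d))
    (hinj : Function.Injective f)
    (horb : ∀ j, ∃ r : ℕ, f j = fun i => x (i + Fin.ofNat (N + 1) r))
    (hall : ∀ r : ℕ, ∃ j, f j = fun i => x (i + Fin.ofNat (N + 1) r))
    (s : Fin k) :
    2 ≤ (Matrix.of (fun (a : Fin d) (b : Fin N → Fin d) =>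
      ∑ j : Fin k, if Fin.cons a b = f j then
        Complex.exp (2 * Real.pi * Complex.I * (s.val : ℂ) * (j.val : ℂ) / (k : ℂ))
      else 0)).rank := by
  classical
  set e : Fin k → ℂ := fun j =>
    Complex.exp (2 * Real.pi * Complex.I * (s.val : ℂ) * (j.val : ℂ) / (k : ℂ)) with he
  set M : Matrix (Fin d) (Fin N → Fin d) ℂ := Matrix.of (fun (a : Fin d) (b : Fin N → Fin d) =>
      ∑ j : Fin k, if Fin.cons a b = f j then e j else 0) with hMdef
  obtain ⟨i0, hi0⟩ := hx0
  obtain ⟨i1, hi1⟩ : ∃ i, x i ≠ 0 := by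
    by_contra h
    push_neg at h
    exact hxne (funext fun i => h i)
  obtain ⟨j1, hj1⟩ := hall i0.val
  obtain ⟨j2, hj2⟩ := hall i1.val
  have hv1 : f j1 0 = 0 := by rw [hj1]; simp [Fin.ofNat_val_eq_self, hi0]
  have hv2 : f j2 0 ≠ 0 := by rw [hj2]; simpa [Fin.ofNat_val_eq_self] using hi1
  have hzf : ∀ j, zcount (f j) = zcount x := by
    intro j
    obtain ⟨r, hr⟩ := horb j
    rw [hr]
    exact zcount_shift x _
  -- diagonal entries are nonzero
  have hMdiag : ∀ j, M (f j 0) (Fin.tail (f j)) = e j := by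
    intro j
    show (∑ j' : Fin k, if Fin.cons (f j 0) (Fin.tail (f j)) = f j' then e j' else 0) = e j
    rw [Fin.cons_self_tail]
    simp [hinj.eq_iff]
  -- off-diagonal entries vanish by the zero-count invariant
  have hMzero : ∀ (a : Fin d) (b : Fin N → Fin d), zcount (Fin.cons a b) ≠ zcount x →
      M a b = 0 := by
    intro a b h
    show (∑ j : Fin k, if Fin.cons a b = f j then e j else 0) = 0
    apply Finset.sum_eq_zero
    intro j _
    rw [if_neg]
    intro hc
    exact h (by rw [hc]; exact hzf j)
  set u : Fin d → ℂ := fun a => M a (Fin.tail (f j1)) with hu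
  set w : Fin d → ℂ := fun a => M a (Fin.tail (f j2)) with hw
  have hu1 : u (f j1 0) ≠ 0 := by rw [hu]; simp only [hMdiag j1]; exact Complex.exp_ne_zero _
  have hw2 : w (f j2 0) ≠ 0 := by rw [hw]; simp only [hMdiag j2]; exact Complex.exp_ne_zero _
  have hzx1 : zcount x = 1 + zcount (Fin.tail (f j1)) := by
    rw [← hzf j1, zcount_self_tail (f j1), if_pos hv1]
  have hzx2 : zcount x = zcount (Fin.tail (f j2)) := by
    rw [← hzf j2, zcount_self_tail (f j2), if_neg hv2, zero_add]
  have hu2 : u (f j2 0) = 0 := by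
    apply hMzero
    rw [zcount_cons, if_neg hv2]
    omega
  have hw1 : w (f j1 0) = 0 := by
    apply hMzero
    rw [zcount_cons, if_pos hv1]
    omega
  -- the two columns are linearly independent
  have hli : LinearIndependent ℂ ![u, w] := by
    rw [LinearIndependent.pair_iff]
    intro a b hab
    have h1 := congrFun hab (f j1 0)
    have h2 := congrFun hab (f j2 0)
    simp only [Pi.add_apply, Pi.smul_apply, smul_eq_mul, Pi.zero_apply, hu2, hw1,
      mul_zero, add_zero, zero_add] at h1 h2
    constructor
    · rcases mul_eq_zero.mp h1 with h | h
      · exact h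
      · exact absurd h hu1
    · rcases mul_eq_zero.mp h2 with h | h
      · exact h
      · exact absurd h hw2
  have hsub : Set.range ![u, w] ⊆ Set.range M.transpose := by
    rintro y ⟨i, rfl⟩
    fin_cases i
    · exact ⟨Fin.tail (f j1), rfl⟩
    · exact ⟨Fin.tail (f j2), rfl⟩
  have h2 : (2 : ℕ) = Module.finrank ℂ (Submodule.span ℂ (Set.range ![u, w])) := by
    rw [finrank_span_eq_card hli, Fintype.card_fin]
  rw [Matrix.rank_eq_finrank_span_cols, h2]
  exact Submodule.finrank_mono (Submodule.span_mono hsub)
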